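/- Let U ⊂ ℝ² be open, H : U → ℝ of class C¹ with DH(x) ≠ 0 for all x ∈ U, and set b = (∂H/∂x₂, −∂H/∂x₁). Let A₀ > 0 and α ∈ (0,1) satisfy |DH(x)| ≥ A₀ |H(x)|^α for all x ∈ U. Let c ∈ ℝ, ν > 0, and let Y : [σ, τ] → U be a C¹ solution of Y′(t) = c·b(Y(t)) − ν DH(Y(t))/|DH(Y(t))|. Then (d/dt) H(Y(t)) = −ν |DH(Y(t))| for all t, so t ↦ H(Y(t)) is strictly decreasing; and if H(Y(t)) ≥ 0 for all t ∈ [σ, τ], then H(Y(σ))^{1−α} − H(Y(τ))^{1−α} ≥ (1−α) ν A₀ (τ − σ); in particular τ − σ ≤ H(Y(σ))^{1−α} / ((1−α) ν A₀). -/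

import Mathlib

open Filter Topology Set Metric

noncomputable section

/-- The plane `ℝ²` as a Euclidean space. -/
abbrev E2 : Type := EuclideanSpace ℝ (Fin 2)

/-- The Hamiltonian vector field `b = (∂H/∂x₂, −∂H/∂x₁)` of `H`. -/
def hamVF (H : E2 → ℝ) (x : E2) : E2 :=
  (WithLp.equiv 2 (Fin 2 → ℝ)).symm
    ![fderiv ℝ H x (EuclideanSpace.single 1 1), -(fderiv ℝ H x (EuclideanSpace.single 0 1))]

lemma grad_inner_aux (H : E2 → ℝ) (x y : E2) :
    inner ℝ (gradient H x) y = fderiv ℝ H x y := by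
  rw [gradient, InnerProductSpace.toDual_symm_apply]

lemma inner_ham_aux (H : E2 → ℝ) (x : E2) :
    (inner ℝ (gradient H x) (hamVF H x) : ℝ) = 0 := by
  rw [PiLp.inner_apply]
  have h0 : gradient H x 0 = fderiv ℝ H x (EuclideanSpace.single 0 1) := by
    rw [← grad_inner_aux, EuclideanSpace.inner_single_right]; simp
  have h1 : gradient H x 1 = fderiv ℝ H x (EuclideanSpace.single 1 1) := by
    rw [← grad_inner_aux, EuclideanSpace.inner_single_right]; simp
  simp [Fin.sum_univ_two, hamVF, h0, h1, PiLp.toLp_apply]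
  ring

/-- Along a solution of `Y′ = c b(Y) − ν DH(Y)/|DH(Y)|`, the value
`H(Y(t))` decreases with derivative `−ν |DH(Y(t))|`; if moreover `|DH| ≥ A₀ |H|^α` on `U`
and `H(Y(t)) ≥ 0`, then `H(Y(σ))^{1−α} − H(Y(τ))^{1−α} ≥ (1−α) ν A₀ (τ−σ)`, and in
particular `τ − σ ≤ H(Y(σ))^{1−α} / ((1−α) ν A₀)`. -/
theorem descent_along_gradient_perturbed_flow
    (U : Set E2) (hU : IsOpen U)
    (H : E2 → ℝ) (hH : ContDiffOn ℝ 1 H U)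
    (hDH : ∀ x ∈ U, gradient H x ≠ 0)
    (A₀ α : ℝ) (hA₀ : 0 < A₀) (hα0 : 0 < α) (hα1 : α < 1)
    (hlow : ∀ x ∈ U, A₀ * |H x| ^ α ≤ ‖gradient H x‖)
    (c ν : ℝ) (hν : 0 < ν)
    (σ τ : ℝ) (hστ : σ ≤ τ)
    (Y : ℝ → E2) (hYU : ∀ t ∈ Icc σ τ, Y t ∈ U)
    (hY : ∀ t ∈ Icc σ τ, HasDerivAt Y
      (c • hamVF H (Y t) - (ν / ‖gradient H (Y t)‖) • gradient H (Y t)) t) :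
    (∀ t ∈ Icc σ τ, HasDerivAt (fun s => H (Y s)) (-(ν * ‖gradient H (Y t)‖)) t) ∧
    StrictAntiOn (fun t => H (Y t)) (Icc σ τ) ∧
    ((∀ t ∈ Icc σ τ, 0 ≤ H (Y t)) →
      (1 - α) * ν * A₀ * (τ - σ) ≤ H (Y σ) ^ (1 - α) - H (Y τ) ^ (1 - α) ∧
      τ - σ ≤ H (Y σ) ^ (1 - α) / ((1 - α) * ν * A₀)) := by
  -- derivative of H ∘ Y
  have hder : ∀ t ∈ Icc σ τ, HasDerivAt (fun s => H (Y s)) (-(ν * ‖gradient H (Y t)‖)) t := by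
    intro t ht
    have hmem := hYU t ht
    have hdiff : DifferentiableAt ℝ H (Y t) :=
      (hH.contDiffAt (hU.mem_nhds hmem)).differentiableAt one_ne_zero
    have hcomp := hdiff.hasFDerivAt.comp_hasDerivAt t (hY t ht)
    refine hcomp.congr_deriv (Eq.symm ?_)
    have hg := hDH _ hmem
    have hgn : ‖gradient H (Y t)‖ ≠ 0 := by simpa using hg
    rw [map_sub, map_smul, map_smul, ← grad_inner_aux, ← grad_inner_aux, inner_ham_aux,
      real_inner_self_eq_norm_sq]
    field_simp
    rw [smul_eq_mul, smul_eq_mul, mul_zero, zero_sub, div_mul_eq_mul_div, sq, ← mul_assoc,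
      mul_div_cancel_right₀ _ hgn]
  refine ⟨hder, ?_, ?_⟩
  · -- strict anti
    have hcont : ContinuousOn (fun s => H (Y s)) (Icc σ τ) :=
      fun t ht => ((hder t ht).continuousAt).continuousWithinAt
    apply strictAntiOn_of_hasDerivWithinAt_neg (convex_Icc σ τ) hcont
      (fun t ht => ((hder t (interior_subset ht)).hasDerivWithinAt))
    intro t ht
    have hg := hDH _ (hYU t (interior_subset ht))
    have : 0 < ‖gradient H (Y t)‖ := norm_pos_iff.mpr hg
    nlinarith
  · intro hpos
    set h : ℝ → ℝ := fun s => H (Y s) with hh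
    set C : ℝ := (1 - α) * ν * A₀ with hC
    have hCpos : 0 < C := by
      have : 0 < 1 - α := by linarith
      positivity
    -- h > 0 on [σ, τ)
    have hstrict : StrictAntiOn h (Icc σ τ) := by
      have hcont : ContinuousOn h (Icc σ τ) :=
        fun t ht => ((hder t ht).continuousAt).continuousWithinAt
      apply strictAntiOn_of_hasDerivWithinAt_neg (convex_Icc σ τ) hcont
        (fun t ht => ((hder t (interior_subset ht)).hasDerivWithinAt))
      intro t ht
      have hg := hDH _ (hYU t (interior_subset ht))
      have : 0 < ‖gradient H (Y t)‖ := norm_pos_iff.mpr hg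
      nlinarith
    have hpos' : ∀ t ∈ Ico σ τ, 0 < h t := by
      intro t ht
      have h1 : h τ < h t := hstrict ⟨ht.1, ht.2.le⟩ (right_mem_Icc.mpr hστ) ht.2
      have := hpos τ (right_mem_Icc.mpr hστ)
      linarith
    -- g := φ + C t is antitone on Icc
    set φ : ℝ → ℝ := fun s => h s ^ (1 - α) with hφ
    have hφcont : ContinuousOn (fun s => φ s + C * s) (Icc σ τ) := by
      apply ContinuousOn.add _ (continuousOn_const.mul continuousOn_id)
      intro t ht
      exact ((Real.continuousAt_rpow_const _ _ (Or.inr (by linarith))).comp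
        ((hder t ht).continuousAt)).continuousWithinAt
    have hanti : AntitoneOn (fun s => φ s + C * s) (Icc σ τ) := by
      apply antitoneOn_of_hasDerivWithinAt_nonpos (convex_Icc σ τ) hφcont
        (f' := fun t => -(ν * ‖gradient H (Y t)‖) * (1 - α) * h t ^ (1 - α - 1) + C * 1)
      · intro t ht
        rw [interior_Icc] at ht
        have htIcc : t ∈ Icc σ τ := ⟨ht.1.le, ht.2.le⟩
        have hht : 0 < h t := hpos' t ⟨ht.1.le, ht.2⟩
        have hd := ((hder t htIcc).rpow_const (p := 1 - α) (Or.inl (ne_of_gt hht))).add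
          ((hasDerivAt_id t).const_mul C)
        exact hd.hasDerivWithinAt
      · intro t ht
        rw [interior_Icc] at ht
        have htIcc : t ∈ Icc σ τ := ⟨ht.1.le, ht.2.le⟩
        have hht : 0 < h t := hpos' t ⟨ht.1.le, ht.2⟩
        have hlow' := hlow _ (hYU t htIcc)
        rw [abs_of_pos hht] at hlow'
        have h2 : (1 - α) * h t ^ (1 - α - 1) * (ν * (A₀ * h t ^ α)) ≤
            (1 - α) * h t ^ (1 - α - 1) * (ν * ‖gradient H (Y t)‖) := by
          apply mul_le_mul_of_nonneg_left _ ?_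
          · exact mul_le_mul_of_nonneg_left hlow' hν.le
          · have h1α : (0:ℝ) < 1 - α := by linarith
            positivity
        have h3 : h t ^ (1 - α - 1) * h t ^ α = 1 := by
          rw [← Real.rpow_add hht]; norm_num
        nlinarith [Real.rpow_pos_of_pos hht (1 - α - 1)]
    have hmain := hanti (left_mem_Icc.mpr hστ) (right_mem_Icc.mpr hστ) hστ
    have hφτ : 0 ≤ φ τ := Real.rpow_nonneg (hpos τ (right_mem_Icc.mpr hστ)) _
    constructor
    · simp only [hφ] at hmain ⊢
      linarith
    · rw [le_div_iff₀ hCpos]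
      simp only [hφ] at hmain hφτ ⊢
      nlinarith
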